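/- For every real δ₁ > 0, each of the two functions f₁₁(s) = ( (δ₁+1) s^{δ₁} + (δ₁−1) s^{δ₁+2} ) / (1 + s²) and f₁₂(s) = ( (δ₁+1) s^{2−δ₁} + (δ₁−1) s^{−δ₁} ) / (1 + s²) is a solution of the ordinary differential equation f''(s) + f'(s)/s + ( 8/(1+s²)² − δ₁²/s² ) f(s) = 0 for all s ∈ (0, ∞). -/

import Mathlib

open Real Filter MeasureTheory

noncomputable section

/-- `f₁₁(s) = ((δ₁+1) s^{δ₁} + (δ₁-1) s^{δ₁+2})/(1+s²)`. -/
def f11 (δ₁ s : ℝ) : ℝ := ((δ₁ + 1) * s ^ δ₁ + (δ₁ - 1) * s ^ (δ₁ + 2)) / (1 + s ^ 2)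

/-- `f₁₂(s) = ((δ₁+1) s^{2-δ₁} + (δ₁-1) s^{-δ₁})/(1+s²)`. -/
def f12 (δ₁ s : ℝ) : ℝ := ((δ₁ + 1) * s ^ (2 - δ₁) + (δ₁ - 1) * s ^ (-δ₁)) / (1 + s ^ 2)

/-- Derivative of a basic building block `c * s^p / (1+s²)^(k+1)` on `(0,∞)`. -/
lemma hasDerivAt_H (c p : ℝ) (k : ℕ) {s : ℝ} (hs : 0 < s) :
    HasDerivAt (fun t : ℝ => c * t ^ p / (1 + t ^ 2) ^ (k + 1))
      (c * p * s ^ (p - 1) / (1 + s ^ 2) ^ (k + 1)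
        - 2 * c * ((k : ℝ) + 1) * s ^ (p + 1) / (1 + s ^ 2) ^ (k + 2)) s := by
  have hD : (0:ℝ) < 1 + s ^ 2 := by positivity
  have hnum : HasDerivAt (fun t : ℝ => c * t ^ p) (c * (p * s ^ (p - 1))) s :=
    (Real.hasDerivAt_rpow_const (Or.inl hs.ne')).const_mul c
  have h2 : HasDerivAt (fun t : ℝ => 1 + t ^ 2) (2 * s) s := by
    simpa using ((hasDerivAt_pow 2 s).const_add 1)
  have hden : HasDerivAt (fun t : ℝ => (1 + t ^ 2) ^ (k + 1))
      ((k + 1 : ℕ) * (1 + s ^ 2) ^ k * (2 * s)) s := by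
    exact (h2.pow (k + 1)).congr_deriv (by simp)
  have h := hnum.div hden (by positivity)
  refine h.congr_deriv ?_
  have e1 : s ^ (p - 1) = s ^ p / s := by
    rw [Real.rpow_sub hs, Real.rpow_one]
  have e2 : s ^ (p + 1) = s ^ p * s := by
    rw [Real.rpow_add hs, Real.rpow_one]
  rw [e1, e2]
  field_simp
  push_cast
  ring

/-- `f11 δ` solves the ODE on `(0,∞)` for every real `δ`. -/
lemma ode_f11 (δ : ℝ) {s : ℝ} (hs : 0 < s) :
    deriv (deriv (f11 δ)) s + deriv (f11 δ) s / s
      + (8 / (1 + s ^ 2) ^ 2 - δ ^ 2 / s ^ 2) * f11 δ s = 0 := by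
  set F1 : ℝ → ℝ := fun t =>
    (δ + 1) * δ * t ^ (δ - 1) / (1 + t ^ 2) ^ (0 + 1)
      - 2 * (δ + 1) * t ^ (δ + 1) / (1 + t ^ 2) ^ (1 + 1)
      + ((δ - 1) * (δ + 2) * t ^ (δ + 1) / (1 + t ^ 2) ^ (0 + 1)
      - 2 * (δ - 1) * t ^ (δ + 3) / (1 + t ^ 2) ^ (1 + 1)) with hF1def
  have hfeq : f11 δ = fun x : ℝ =>
      (δ + 1) * x ^ δ / (1 + x ^ 2) ^ (0 + 1) + (δ - 1) * x ^ (δ + 2) / (1 + x ^ 2) ^ (0 + 1) := by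
    funext x; simp [f11]; ring
  have hF1 : ∀ t : ℝ, 0 < t → HasDerivAt (f11 δ) (F1 t) t := by
    intro t ht
    have h := (hasDerivAt_H (δ + 1) δ 0 ht).add (hasDerivAt_H (δ - 1) (δ + 2) 0 ht)
    rw [hfeq]
    refine (h.congr_deriv ?_)
    rw [hF1def]
    rw [show δ + 2 - 1 = δ + 1 by ring, show δ + 2 + 1 = δ + 3 by ring]
    push_cast
    ring
  have hF2 : HasDerivAt F1
      (((δ + 1) * δ * (δ - 1) * s ^ (δ - 1 - 1) / (1 + s ^ 2) ^ (0 + 1)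
          - 2 * ((δ + 1) * δ) * ((0 : ℝ) + 1) * s ^ (δ - 1 + 1) / (1 + s ^ 2) ^ (0 + 2))
        - (2 * (δ + 1) * (δ + 1) * s ^ (δ + 1 - 1) / (1 + s ^ 2) ^ (1 + 1)
          - 2 * (2 * (δ + 1)) * ((1 : ℝ) + 1) * s ^ (δ + 1 + 1) / (1 + s ^ 2) ^ (1 + 2))
        + (((δ - 1) * (δ + 2) * (δ + 1) * s ^ (δ + 1 - 1) / (1 + s ^ 2) ^ (0 + 1)
          - 2 * ((δ - 1) * (δ + 2)) * ((0 : ℝ) + 1) * s ^ (δ + 1 + 1) / (1 + s ^ 2) ^ (0 + 2))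
        - (2 * (δ - 1) * (δ + 3) * s ^ (δ + 3 - 1) / (1 + s ^ 2) ^ (1 + 1)
          - 2 * (2 * (δ - 1)) * ((1 : ℝ) + 1) * s ^ (δ + 3 + 1) / (1 + s ^ 2) ^ (1 + 2)))) s := by
    have h := (((hasDerivAt_H ((δ + 1) * δ) (δ - 1) 0 hs).sub
        (hasDerivAt_H (2 * (δ + 1)) (δ + 1) 1 hs)).add
      ((hasDerivAt_H ((δ - 1) * (δ + 2)) (δ + 1) 0 hs).sub
        (hasDerivAt_H (2 * (δ - 1)) (δ + 3) 1 hs)))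
    refine h.congr_deriv ?_
    push_cast
    ring
  have hev : deriv (f11 δ) =ᶠ[nhds s] F1 := by
    filter_upwards [Ioi_mem_nhds hs] with t ht using (hF1 t ht).deriv
  have key1 : deriv (f11 δ) s = F1 s := (hF1 s hs).deriv
  rw [hev.deriv_eq, hF2.deriv, key1, hF1def]
  simp only [f11]
  have hD : (0:ℝ) < 1 + s ^ 2 := by positivity
  have eA : s ^ (δ - 1 - 1) = s ^ δ / s ^ 2 := by
    rw [show δ - 1 - 1 = δ - ((2:ℕ):ℝ) by push_cast; ring, Real.rpow_sub hs, Real.rpow_natCast]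
  have eB : s ^ (δ - 1 + 1) = s ^ δ := by rw [show δ - 1 + 1 = δ by ring]
  have eC : s ^ (δ + 1 - 1) = s ^ δ := by rw [show δ + 1 - 1 = δ by ring]
  have eD : s ^ (δ + 1 + 1) = s ^ δ * s ^ 2 := by
    rw [show δ + 1 + 1 = δ + ((2:ℕ):ℝ) by push_cast; ring, Real.rpow_add hs, Real.rpow_natCast]
  have eE : s ^ (δ + 3 - 1) = s ^ δ * s ^ 2 := by
    rw [show δ + 3 - 1 = δ + ((2:ℕ):ℝ) by push_cast; ring, Real.rpow_add hs, Real.rpow_natCast]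
  have eF : s ^ (δ + 3 + 1) = s ^ δ * s ^ 4 := by
    rw [show δ + 3 + 1 = δ + ((4:ℕ):ℝ) by push_cast; ring, Real.rpow_add hs, Real.rpow_natCast]
  have eG : s ^ (δ - 1) = s ^ δ / s := by
    rw [Real.rpow_sub hs, Real.rpow_one]
  have eH : s ^ (δ + 1) = s ^ δ * s := by
    rw [Real.rpow_add hs, Real.rpow_one]
  have eI : s ^ (δ + 3) = s ^ δ * s ^ 3 := by
    rw [show δ + 3 = δ + ((3:ℕ):ℝ) by push_cast; ring, Real.rpow_add hs, Real.rpow_natCast]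
  have eJ : s ^ (δ + 2) = s ^ δ * s ^ 2 := by
    rw [show δ + 2 = δ + ((2:ℕ):ℝ) by push_cast; ring, Real.rpow_add hs, Real.rpow_natCast]
  rw [eA, eB, eC, eD, eE, eF, eG, eH, eI, eJ]
  field_simp
  ring

/-- `f12 δ` is `-(f11 (-δ))`. -/
lemma f12_eq_neg (δ : ℝ) : f12 δ = fun s => -(f11 (-δ) s) := by
  funext s
  simp only [f11, f12]
  rw [show -δ + 2 = 2 - δ by ring]
  ring

/-- Equation (2.3): `f₁₁` and `f₁₂` are fundamental solutions of the linearized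
radial ODE. -/
theorem fundamental_solutions (δ₁ : ℝ) (hδ₁ : 0 < δ₁) :
    (∀ s > (0 : ℝ), deriv (deriv (f11 δ₁)) s + deriv (f11 δ₁) s / s
        + (8 / (1 + s ^ 2) ^ 2 - δ₁ ^ 2 / s ^ 2) * f11 δ₁ s = 0)
    ∧ (∀ s > (0 : ℝ), deriv (deriv (f12 δ₁)) s + deriv (f12 δ₁) s / s
        + (8 / (1 + s ^ 2) ^ 2 - δ₁ ^ 2 / s ^ 2) * f12 δ₁ s = 0) := by
  constructor
  · intro s hs
    exact ode_f11 δ₁ hs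
  · intro s hs
    have hneg := f12_eq_neg δ₁
    have hd1 : deriv (f12 δ₁) = fun t => -(deriv (f11 (-δ₁)) t) := by
      rw [hneg]; funext t; exact deriv.neg
    have hd2 : deriv (deriv (f12 δ₁)) s = -(deriv (deriv (f11 (-δ₁))) s) := by
      rw [hd1]; exact deriv.neg
    have hval : f12 δ₁ s = -(f11 (-δ₁) s) := by rw [hneg]
    have h := ode_f11 (-δ₁) hs
    rw [neg_sq] at h
    rw [hd2, hd1, hval]
    linear_combination -h
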